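/- Let N ≥ 2 be even and let θ : Fin N → {0,1} with N₁ = |{v : θ v = 1}|. Then the maximum, over all fixed-point-free involutions σ of Fin N, of the Strongest Link total payoff (1/2)·∑_{v} max(θ v, θ(σ v)) equals min(N₁, N/2). -/

import Mathlib

/-- For even `N ≥ 2` and types `θ : Fin N → {0,1}`, the maximum over all
fixed-point-free involutions `σ` of the Strongest Link total payoff
`(1/2)·∑_v max(θ v, θ(σ v))` equals `min(N₁, N/2)`, where `N₁` is the number
of type-1 workers. -/
theorem strongest_link_benchmark (N : ℕ) (hN : 2 ≤ N) (hEven : Even N)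
    (θ : Fin N → ℕ) (hθ : ∀ v, θ v ≤ 1) :
    IsGreatest
      {x : ℕ | ∃ σ : Fin N → Fin N, (∀ v, σ (σ v) = v) ∧ (∀ v, σ v ≠ v) ∧
        x = (∑ v, max (θ v) (θ (σ v))) / 2}
      (min (Finset.univ.filter fun v => θ v = 1).card (N / 2)) := by
  obtain ⟨m, hm⟩ := hEven
  set N₁ := (Finset.univ.filter fun v => θ v = 1).card with hN₁def
  have hN₁ : N₁ ≤ N := by
    calc N₁ ≤ (Finset.univ : Finset (Fin N)).card := Finset.card_filter_le _ _
    _ = N := by simp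
  have hθ01 : ∀ v, θ v = 0 ∨ θ v = 1 := fun v => by have := hθ v; omega
  constructor
  · -- membership: construct the optimal matching
    -- sorting equivalence g with θ (g k) = 1 ↔ k.val < N₁
    classical
    have hcard1 : Fintype.card {v : Fin N // θ v = 1} = N₁ := by
      rw [Fintype.card_subtype]
    have hcard2 : Fintype.card {k : Fin N // k.val < N₁} = N₁ := by
      rw [Fintype.card_subtype]
      have : (Finset.univ.filter fun k : Fin N => k.val < N₁).card
          = ∑ k : Fin N, (if k.val < N₁ then 1 else 0) := by
        rw [Finset.card_filter]
      rw [this, Fin.sum_univ_eq_sum_range (fun i => if i < N₁ then 1 else 0) N,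
        ← Finset.card_filter]
      have : (Finset.range N).filter (fun i => i < N₁) = Finset.range N₁ := by
        ext i; simp; omega
      rw [this, Finset.card_range]
    have hcard1' : Fintype.card {v : Fin N // ¬ θ v = 1} = N - N₁ := by
      rw [Fintype.card_subtype_compl, hcard1, Fintype.card_fin]
    have hcard2' : Fintype.card {k : Fin N // ¬ k.val < N₁} = N - N₁ := by
      rw [Fintype.card_subtype_compl, hcard2, Fintype.card_fin]
    let e : {k : Fin N // k.val < N₁} ≃ {v : Fin N // θ v = 1} :=
      Fintype.equivOfCardEq (by rw [hcard1, hcard2])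
    let e' : {k : Fin N // ¬ k.val < N₁} ≃ {v : Fin N // ¬ θ v = 1} :=
      Fintype.equivOfCardEq (by rw [hcard1', hcard2'])
    let g : Fin N ≃ Fin N :=
      (Equiv.sumCompl (fun k : Fin N => k.val < N₁)).symm.trans
        ((Equiv.sumCongr e e').trans (Equiv.sumCompl (fun v => θ v = 1)))
    have hg : ∀ k : Fin N, θ (g k) = if k.val < N₁ then 1 else 0 := by
      intro k
      by_cases h : k.val < N₁
      · rw [if_pos h]
        have hgk : g k = ((e ⟨k, h⟩ : {v : Fin N // θ v = 1}) : Fin N) := by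
          simp only [g, Equiv.trans_apply]
          rw [Equiv.sumCompl_symm_apply_of_pos (p := fun k : Fin N => (k : ℕ) < N₁) (a := k) h]
          rfl
        rw [hgk]
        exact (e ⟨k, h⟩).2
      · rw [if_neg h]
        have hgk : g k = ((e' ⟨k, h⟩ : {v : Fin N // ¬ θ v = 1}) : Fin N) := by
          simp only [g, Equiv.trans_apply]
          rw [Equiv.sumCompl_symm_apply_of_neg (p := fun k : Fin N => (k : ℕ) < N₁) (a := k) h]
          rfl
        rw [hgk]
        have h2 := (e' ⟨k, h⟩).2
        have h3 := hθ ((e' ⟨k, h⟩ : {v : Fin N // ¬ θ v = 1}) : Fin N)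
        omega
    refine ⟨fun v => g (Fin.rev (g.symm v)), ?_, ?_, ?_⟩
    · intro v; simp [Fin.rev_rev]
    · intro v hv
      have : Fin.rev (g.symm v) = g.symm v := by
        have := congrArg g.symm hv
        simpa using this
      have hval := congrArg Fin.val this
      rw [Fin.val_rev] at hval
      have := (g.symm v).isLt
      omega
    · -- compute the sum
      have hsum : (∑ v, max (θ v) (θ (g (Fin.rev (g.symm v)))))
          = ∑ k : Fin N, max (θ (g k)) (θ (g (Fin.rev k))) := by
        rw [← Equiv.sum_comp g (fun v => max (θ v) (θ (g (Fin.rev (g.symm v)))))]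
        simp
      rw [hsum]
      have hsum2 : (∑ k : Fin N, max (θ (g k)) (θ (g (Fin.rev k))))
          = ∑ i ∈ Finset.range N, (if i < N₁ ∨ N - N₁ ≤ i then 1 else 0) := by
        have : ∀ k : Fin N, max (θ (g k)) (θ (g (Fin.rev k)))
            = (fun i => if i < N₁ ∨ (N - 1 - i < N₁ ∧ i < N) then 1 else 0) k.val := by
          intro k
          have hk := k.isLt
          simp only [hg, Fin.val_rev]
          by_cases h1 : (k : ℕ) < N₁ <;> by_cases h2 : N - ((k : ℕ) + 1) < N₁ <;>
            simp only [h1, h2, if_true, if_false, ite_true, ite_false] <;>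
            split_ifs with h3 <;> (try simp) <;> (try simp at h3) <;> omega
        rw [Finset.sum_congr rfl (fun k _ => this k),
          Fin.sum_univ_eq_sum_range (fun i => if i < N₁ ∨ (N - 1 - i < N₁ ∧ i < N) then 1 else 0) N]
        refine Finset.sum_congr rfl (fun i hi => ?_)
        simp only [Finset.mem_range] at hi
        congr 1
        simp only [eq_iff_iff]
        omega
      rw [hsum2, ← Finset.card_filter]
      have hfil : (Finset.range N).filter (fun i => i < N₁ ∨ N - N₁ ≤ i)
          = Finset.range N \ Finset.Ico N₁ (N - N₁) := by
        ext i
        simp only [Finset.mem_filter, Finset.mem_range, Finset.mem_sdiff, Finset.mem_Ico]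
        omega
      have hsub : Finset.Ico N₁ (N - N₁) ⊆ Finset.range N := by
        intro i hi
        simp only [Finset.mem_Ico] at hi
        simp only [Finset.mem_range]
        omega
      rw [hfil, Finset.card_sdiff_of_subset hsub, Finset.card_range, Nat.card_Ico]
      omega
  · -- upper bound
    rintro x ⟨σ, hinv, hfpf, rfl⟩
    have hbij : Function.Bijective σ := Function.Involutive.bijective hinv
    have hperm : ∑ v, θ (σ v) = ∑ v, θ v :=
      Fintype.sum_bijective σ hbij _ _ (fun v => rfl)
    have hθsum : ∑ v, θ v = N₁ := by
      rw [hN₁def, Finset.card_filter]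
      refine Finset.sum_congr rfl (fun v _ => ?_)
      rcases hθ01 v with h | h <;> simp [h]
    have h1 : (∑ v, max (θ v) (θ (σ v))) ≤ 2 * N₁ := by
      calc (∑ v, max (θ v) (θ (σ v))) ≤ ∑ v, (θ v + θ (σ v)) :=
            Finset.sum_le_sum (fun v _ => by omega)
        _ = 2 * N₁ := by rw [Finset.sum_add_distrib, hperm, hθsum]; ring
    have h2 : (∑ v, max (θ v) (θ (σ v))) ≤ N := by
      calc (∑ v, max (θ v) (θ (σ v))) ≤ ∑ _v : Fin N, 1 :=
            Finset.sum_le_sum (fun v _ => by have := hθ v; have := hθ (σ v); omega)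
        _ = N := by simp
    omega
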